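/- If f(z) = z + a_2 z² + a_3 z³ + ⋯ is in BS(α), 0 ≤ α < 1, i.e., z f'(z)/f(z) - 1 ≺ z/(1-α z²), then for every complex μ, |a_3 - μ a_2²| ≤ (1/2) max{1, |2μ - 1|}. -/

import Mathlib

open Complex Metric

open Filter Set



private lemma analyticAt_deriv' {u : ℂ → ℂ} (h : AnalyticAt ℂ u 0) :
    AnalyticAt ℂ (deriv u) 0 := by
  obtain ⟨t, ht, hto, h0t⟩ := _root_.eventually_nhds_iff.mp h.eventually_analyticAt
  exact (AnalyticOnNhd.deriv (fun z hz => ht z hz)) 0 h0t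

private lemma it2_eq {g : ℂ → ℂ} : iteratedDeriv 2 g 0 = deriv (deriv g) 0 := by
  rw [iteratedDeriv_succ, iteratedDeriv_one]

private lemma it3_eq {g : ℂ → ℂ} : iteratedDeriv 3 g 0 = iteratedDeriv 2 (deriv g) 0 := by
  have h3 : (3 : ℕ) = 2 + 1 := rfl
  rw [h3, iteratedDeriv_succ']

private lemma it2_congr {g1 g2 : ℂ → ℂ} (h : g1 =ᶠ[nhds (0:ℂ)] g2) :
    iteratedDeriv 2 g1 0 = iteratedDeriv 2 g2 0 := by
  rw [it2_eq, it2_eq]; exact h.deriv.deriv_eq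

private lemma it3_congr {g1 g2 : ℂ → ℂ} (h : g1 =ᶠ[nhds (0:ℂ)] g2) :
    iteratedDeriv 3 g1 0 = iteratedDeriv 3 g2 0 := by
  rw [it3_eq, it3_eq]; exact it2_congr h.deriv

private lemma ev_deriv_mul {u v : ℂ → ℂ} (hu : AnalyticAt ℂ u 0) (hv : AnalyticAt ℂ v 0) :
    deriv (fun z => u z * v z) =ᶠ[nhds (0:ℂ)] fun z => deriv u z * v z + u z * deriv v z := by
  filter_upwards [hu.eventually_analyticAt, hv.eventually_analyticAt] with z hu' hv'
  exact deriv_mul hu'.differentiableAt hv'.differentiableAt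

private lemma ev_deriv_add {u v : ℂ → ℂ} (hu : AnalyticAt ℂ u 0) (hv : AnalyticAt ℂ v 0) :
    deriv (fun z => u z + v z) =ᶠ[nhds (0:ℂ)] fun z => deriv u z + deriv v z := by
  filter_upwards [hu.eventually_analyticAt, hv.eventually_analyticAt] with z hu' hv'
  exact deriv_add hu'.differentiableAt hv'.differentiableAt

private lemma it2_mul {u v : ℂ → ℂ} (hu : AnalyticAt ℂ u 0) (hv : AnalyticAt ℂ v 0) :
    iteratedDeriv 2 (fun z => u z * v z) 0 =
      iteratedDeriv 2 u 0 * v 0 + 2 * deriv u 0 * deriv v 0 + u 0 * iteratedDeriv 2 v 0 := by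
  rw [it2_eq, (ev_deriv_mul hu hv).deriv_eq,
    deriv_fun_add (f := fun z => deriv u z * v z) (g := fun z => u z * deriv v z)
      ((analyticAt_deriv' hu).mul hv).differentiableAt
      (hu.mul (analyticAt_deriv' hv)).differentiableAt,
    deriv_fun_mul (analyticAt_deriv' hu).differentiableAt hv.differentiableAt,
    deriv_fun_mul hu.differentiableAt (analyticAt_deriv' hv).differentiableAt,
    it2_eq, it2_eq]
  ring

private lemma it2_add {u v : ℂ → ℂ} (hu : AnalyticAt ℂ u 0) (hv : AnalyticAt ℂ v 0) :
    iteratedDeriv 2 (fun z => u z + v z) 0 = iteratedDeriv 2 u 0 + iteratedDeriv 2 v 0 := by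
  rw [it2_eq, (ev_deriv_add hu hv).deriv_eq,
    deriv_fun_add (analyticAt_deriv' hu).differentiableAt (analyticAt_deriv' hv).differentiableAt,
    it2_eq, it2_eq]

private lemma it3_mul {u v : ℂ → ℂ} (hu : AnalyticAt ℂ u 0) (hv : AnalyticAt ℂ v 0) :
    iteratedDeriv 3 (fun z => u z * v z) 0 =
      iteratedDeriv 3 u 0 * v 0 + 3 * iteratedDeriv 2 u 0 * deriv v 0 +
        3 * deriv u 0 * iteratedDeriv 2 v 0 + u 0 * iteratedDeriv 3 v 0 := by
  rw [it3_eq, it2_congr (ev_deriv_mul hu hv),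
    it2_add (u := fun z => deriv u z * v z) (v := fun z => u z * deriv v z)
      ((analyticAt_deriv' hu).mul hv) (hu.mul (analyticAt_deriv' hv)),
    it2_mul (analyticAt_deriv' hu) hv, it2_mul hu (analyticAt_deriv' hv),
    it3_eq (g := u), it3_eq (g := v), it2_eq (g := u), it2_eq (g := v)]
  rw [it2_eq, it2_eq]
  ring


private lemma it2_eq' {g : ℂ → ℂ} : iteratedDeriv 2 g 0 = deriv (deriv g) 0 := by
  rw [iteratedDeriv_succ, iteratedDeriv_one]

private lemma it2_const_add {g : ℂ → ℂ} (A : ℂ) :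
    iteratedDeriv 2 (fun z => A + g z) 0 = iteratedDeriv 2 g 0 := by
  rw [it2_eq', it2_eq', deriv_const_add' A]

private lemma it2_cmul {g : ℂ → ℂ} (A : ℂ) :
    iteratedDeriv 2 (fun z => A * g z) 0 = A * iteratedDeriv 2 g 0 := by
  rw [it2_eq', it2_eq', deriv_const_mul_field' A, deriv_const_mul_field' A]

private lemma it2_const_sub {g : ℂ → ℂ} (A : ℂ) :
    iteratedDeriv 2 (fun z => A - g z) 0 = -iteratedDeriv 2 g 0 := by
  rw [it2_eq', it2_eq']
  have h1 : deriv (fun z => A - g z) = fun z => -deriv g z := by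
    funext z; exact deriv_const_sub A
  rw [h1, deriv.fun_neg']

private lemma normSq_lt_one {u : ℂ} (hu : ‖u‖ < 1) : normSq u < 1 := by
  have h := Complex.sq_norm u
  nlinarith [norm_nonneg u]

private lemma mobius_lt {u a : ℂ} (hu : ‖u‖ < 1) (ha : ‖a‖ < 1) :
    ‖(u - a) / (1 - (starRingEnd ℂ) a * u)‖ < 1 := by
  have hlt : normSq (u - a) < normSq (1 - (starRingEnd ℂ) a * u) := by
    have h1 : normSq (u - a) = normSq u + normSq a - 2 * (u * (starRingEnd ℂ) a).re :=
      normSq_sub u a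
    have h2 : normSq (1 - (starRingEnd ℂ) a * u)
        = 1 + normSq a * normSq u - 2 * (u * (starRingEnd ℂ) a).re := by
      rw [normSq_sub]
      have h3 : ((1 : ℂ) * (starRingEnd ℂ) ((starRingEnd ℂ) a * u)).re
          = (u * (starRingEnd ℂ) a).re := by
        rw [one_mul, map_mul, Complex.conj_conj]
        rw [show a * (starRingEnd ℂ) u = (starRingEnd ℂ) (u * (starRingEnd ℂ) a) by
          rw [map_mul, Complex.conj_conj]; ring]
        exact Complex.conj_re _
      rw [h3, normSq_one, normSq_mul, normSq_conj]
    have hnu := normSq_lt_one hu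
    have hna := normSq_lt_one ha
    have h0u : 0 ≤ normSq u := normSq_nonneg u
    have h0a : 0 ≤ normSq a := normSq_nonneg a
    rw [h1, h2]
    nlinarith
  have hden : (1 : ℂ) - (starRingEnd ℂ) a * u ≠ 0 := by
    intro h
    rw [h, map_zero] at hlt
    exact absurd hlt (not_lt.mpr (normSq_nonneg _))
  have hdpos : 0 < ‖(1 : ℂ) - (starRingEnd ℂ) a * u‖ := norm_pos_iff.mpr hden
  rw [norm_div, div_lt_one hdpos]
  have hsq : ‖u - a‖ ^ 2 < ‖1 - (starRingEnd ℂ) a * u‖ ^ 2 := by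
    rw [← Complex.sq_norm, ← Complex.sq_norm] at hlt
    exact hlt
  exact lt_of_pow_lt_pow_left₀ 2 (norm_nonneg _) hsq


private lemma it2_eq3 {g : ℂ → ℂ} : iteratedDeriv 2 g 0 = deriv (deriv g) 0 := by
  rw [iteratedDeriv_succ, iteratedDeriv_one]

private lemma schwarz_pick {wf : ℂ → ℂ} (hd : DifferentiableOn ℂ wf (ball 0 1))
    (h0 : wf 0 = 0) (hm : Set.MapsTo wf (ball (0:ℂ) 1) (ball (0:ℂ) 1)) :
    ‖deriv wf 0‖ ≤ 1 ∧ ‖iteratedDeriv 2 wf 0‖ ≤ 2 * (1 - ‖deriv wf 0‖ ^ 2) := by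
  have mem0 : (0:ℂ) ∈ ball (0:ℂ) 1 := mem_ball_self one_pos
  have hm' : Set.MapsTo wf (ball (0:ℂ) 1) (ball (wf 0) 1) := by rw [h0]; exact hm
  set φ := dslope wf 0 with hφdef
  have hφd : DifferentiableOn ℂ φ (ball 0 1) :=
    (differentiableOn_dslope (ball_mem_nhds _ one_pos)).mpr hd
  have hφ1 : ∀ z ∈ ball (0:ℂ) 1, ‖φ z‖ ≤ 1 := fun z hz => by
    simpa using Complex.norm_dslope_le_div_of_mapsTo_ball hd (hm'.mono_right ball_subset_closedBall) hz
  have hφ0 : φ 0 = deriv wf 0 := dslope_same wf 0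
  have hφa : AnalyticAt ℂ φ 0 :=
    ((analyticOnNhd_iff_differentiableOn isOpen_ball).mpr hφd) 0 mem0
  have ha1 : ‖deriv wf 0‖ ≤ 1 := hφ0 ▸ hφ1 0 mem0
  -- wf z = z * φ z
  have hw_eq : wf = fun z => z * φ z := by
    funext z
    rcases eq_or_ne z 0 with rfl | hz
    · simp [h0]
    · rw [hφdef, dslope_of_ne _ hz, slope_def_field, h0]
      field_simp
      ring
  -- key inequality
  have hkey : ‖deriv φ 0‖ ≤ 1 - ‖φ 0‖ ^ 2 := by
    by_cases hstrict : ∀ z ∈ ball (0:ℂ) 1, ‖φ z‖ < 1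
    · have ha : ‖φ 0‖ < 1 := hstrict 0 mem0
      set a := φ 0 with hadef
      have hden : ∀ z ∈ ball (0:ℂ) 1, (1:ℂ) - (starRingEnd ℂ) a * φ z ≠ 0 := by
        intro z hz h
        rw [sub_eq_zero] at h
        have : ‖(starRingEnd ℂ) a * φ z‖ < 1 := by
          rw [norm_mul, RCLike.norm_conj]
          calc ‖a‖ * ‖φ z‖ ≤ ‖a‖ * 1 := by
                exact mul_le_mul_of_nonneg_left (hφ1 z hz) (norm_nonneg a)
            _ < 1 := by simpa using ha
        rw [← h] at this; simp at this
      set ψ := fun z => (φ z - a) / (1 - (starRingEnd ℂ) a * φ z) with hψdef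
      have hψd : DifferentiableOn ℂ ψ (ball 0 1) := by
        apply DifferentiableOn.div (hφd.sub_const a)
        · exact (differentiableOn_const _).sub ((differentiableOn_const _).mul hφd)
        · exact hden
      have hψ0 : ψ 0 = 0 := by simp [hψdef]; exact Or.inl (sub_self _)
      have hψm : Set.MapsTo ψ (ball (0:ℂ) 1) (ball (ψ 0) 1) := by
        intro z hz
        rw [hψ0, mem_ball_zero_iff]
        exact mobius_lt (hstrict z hz) ha
      have hub : ‖deriv ψ 0‖ ≤ 1 :=
        le_of_le_of_eq (Complex.norm_deriv_le_div_of_mapsTo_ball hψd (hψm.mono_right ball_subset_closedBall) one_pos) (by norm_num)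
      -- compute deriv ψ 0
      have hca : (1:ℂ) - (starRingEnd ℂ) a * a = ((1 - normSq a : ℝ) : ℂ) := by
        rw [mul_comm, Complex.mul_conj]; push_cast; ring
      have hδ : (1:ℂ) - (starRingEnd ℂ) a * φ 0 ≠ 0 := hden 0 mem0
      have hderiv : deriv ψ 0 = deriv φ 0 / (1 - (starRingEnd ℂ) a * a) := by
        rw [hψdef]
        rw [deriv_fun_div (d := fun z => 1 - (starRingEnd ℂ) a * φ z) (hφa.differentiableAt.sub_const a)
          ((differentiableAt_const _).sub ((differentiableAt_const _).mul hφa.differentiableAt))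
          hδ]
        rw [deriv_sub_const, deriv_const_sub, deriv_const_mul _ hφa.differentiableAt]
        rw [← hadef]
        have : a - a = 0 := sub_self a
        field_simp [this, show (1:ℂ) - (starRingEnd ℂ) a * a ≠ 0 from hδ]
        ring
      have hnorm_ca : ‖(1:ℂ) - (starRingEnd ℂ) a * a‖ = 1 - ‖a‖ ^ 2 := by
        have hnn : (0:ℝ) ≤ 1 - normSq a := by have := normSq_lt_one ha; linarith
        rw [hca, Complex.norm_real, Real.norm_eq_abs, _root_.abs_of_nonneg hnn, ← Complex.sq_norm]
      rw [hderiv, norm_div, hnorm_ca, div_le_one (by nlinarith [norm_nonneg a, ha])] at hub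
      linarith [hub]
    · push_neg at hstrict
      obtain ⟨z0, hz0, hge⟩ := hstrict
      have hmax : IsMaxOn (norm ∘ φ) (ball (0:ℂ) 1) z0 := by
        intro z hz
        exact le_trans (hφ1 z hz) hge
      have heqc := Complex.eqOn_of_isPreconnected_of_isMaxOn_norm
        (convex_ball (0:ℂ) 1).isPreconnected isOpen_ball hφd hz0 hmax
      have hφ0c : φ 0 = φ z0 := heqc mem0
      have hn1 : ‖φ 0‖ = 1 := le_antisymm (hφ1 0 mem0) (by rw [hφ0c]; exact hge)
      have hdφ : deriv φ 0 = 0 := by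
        have hev : φ =ᶠ[nhds (0:ℂ)] Function.const ℂ (φ z0) :=
          eventuallyEq_of_mem (isOpen_ball.mem_nhds mem0) heqc
        rw [hev.deriv_eq]
        exact deriv_const _ _
      rw [hdφ, hn1]
      simp
  refine ⟨ha1, ?_⟩
  -- iteratedDeriv 2 wf 0 = 2 * deriv φ 0
  have hid2 : iteratedDeriv 2 wf 0 = 2 * deriv φ 0 := by
    have h := it2_mul (u := (id : ℂ → ℂ)) (v := φ) analyticAt_id hφa
    simp only [id_eq] at h
    rw [hw_eq, h]
    have h1 : iteratedDeriv 2 (id : ℂ → ℂ) 0 = 0 := by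
      rw [it2_eq3]
      have : deriv (id : ℂ → ℂ) = fun _ => 1 := funext fun x => deriv_id x
      rw [this]
      simp
    have h2 : deriv (id : ℂ → ℂ) 0 = 1 := deriv_id 0
    rw [h1, h2]
    ring
  rw [hid2, ← hφ0, norm_mul]
  have h2n : ‖(2:ℂ)‖ = 2 := by norm_num
  rw [h2n]
  linarith [hkey]
theorem fekete_szego_BS (α : ℝ) (hα0 : 0 ≤ α) (hα1 : α < 1)
    (f : ℂ → ℂ) (hf : DifferentiableOn ℂ f (ball (0:ℂ) 1))
    (hf0 : f 0 = 0) (hf'0 : deriv f 0 = 1)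
    (hfne : ∀ z ∈ ball (0:ℂ) 1, z ≠ 0 → f z ≠ 0)
    (hsub : ∃ w : ℂ → ℂ, DifferentiableOn ℂ w (ball (0:ℂ) 1) ∧ w 0 = 0 ∧
      (∀ z ∈ ball (0:ℂ) 1, w z ∈ ball (0:ℂ) 1) ∧
      ∀ z ∈ ball (0:ℂ) 1, z ≠ 0 →
        z * deriv f z / f z - 1 = w z / (1 - (α : ℂ) * (w z) ^ 2))
    (μ : ℂ) :
    ‖iteratedDeriv 3 f 0 / 6 - μ * (iteratedDeriv 2 f 0 / 2) ^ 2‖ ≤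
      (1 / 2) * max 1 ‖2 * μ - 1‖ := by
  obtain ⟨w, hwd, hw0, hwm, heqn⟩ := hsub
  have mem0 : (0:ℂ) ∈ ball (0:ℂ) 1 := mem_ball_self one_pos
  set c : ℂ := (α : ℂ) with hc
  have hfa : AnalyticAt ℂ f 0 :=
    ((analyticOnNhd_iff_differentiableOn isOpen_ball).mpr hf) 0 mem0
  have hwa : AnalyticAt ℂ w 0 :=
    ((analyticOnNhd_iff_differentiableOn isOpen_ball).mpr hwd) 0 mem0
  have hf'a : AnalyticAt ℂ (deriv f) 0 := analyticAt_deriv' hfa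
  have hWa : AnalyticAt ℂ (fun z => w z * w z) 0 := hwa.mul hwa
  have hdda : AnalyticAt ℂ (fun z => (1:ℂ) + (-c) * (w z * w z)) 0 :=
    analyticAt_const.add (analyticAt_const.mul hWa)
  have hqa : AnalyticAt ℂ (fun z => deriv f z * ((1:ℂ) + (-c) * (w z * w z))) 0 :=
    hf'a.mul hdda
  have heea : AnalyticAt ℂ (fun z => (1:ℂ) + (w z + (-c) * (w z * w z))) 0 :=
    analyticAt_const.add (hwa.add (analyticAt_const.mul hWa))
  -- the two sides of the cross-multiplied subordination equation
  have hGeq : Set.EqOn (fun z => z * (deriv f z * ((1:ℂ) + (-c) * (w z * w z))))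
      (fun z => f z * ((1:ℂ) + (w z + (-c) * (w z * w z)))) (ball (0:ℂ) 1) := by
    intro z hz
    rcases eq_or_ne z 0 with rfl | hz0
    · simp [hf0]
    · have h := heqn z hz hz0
      have hfz := hfne z hz hz0
      have hw1 : ‖w z‖ < 1 := mem_ball_zero_iff.mp (hwm z hz)
      have hcn : ‖c‖ = α := by
        rw [hc, Complex.norm_real, Real.norm_eq_abs, _root_.abs_of_nonneg hα0]
      have hdz : (1:ℂ) - c * (w z) ^ 2 ≠ 0 := by
        intro hcontra
        rw [sub_eq_zero] at hcontra
        have hlt : ‖c * w z ^ 2‖ < 1 := by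
          rw [norm_mul, norm_pow, hcn]
          nlinarith [norm_nonneg (w z)]
        rw [← hcontra] at hlt
        simp at hlt
      have key : z * deriv f z * (1 - c * w z ^ 2)
          = f z * (1 + w z - c * w z ^ 2) := by
        rw [div_sub_one hfz, div_eq_div_iff hfz hdz] at h
        linear_combination h
      show z * (deriv f z * ((1:ℂ) + (-c) * (w z * w z)))
          = f z * ((1:ℂ) + (w z + (-c) * (w z * w z)))
      linear_combination key
  have hGev : (fun z => z * (deriv f z * ((1:ℂ) + (-c) * (w z * w z))))
      =ᶠ[nhds (0:ℂ)] fun z => f z * ((1:ℂ) + (w z + (-c) * (w z * w z))) :=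
    eventuallyEq_of_mem (isOpen_ball.mem_nhds mem0) hGeq
  -- basic derivative facts
  have hdW : deriv (fun z => w z * w z) 0 = 0 := by
    rw [deriv_fun_mul hwa.differentiableAt hwa.differentiableAt, hw0]; ring
  have h2W : iteratedDeriv 2 (fun z => w z * w z) 0 = 2 * (deriv w 0) ^ 2 := by
    rw [it2_mul hwa hwa, hw0]; ring
  have hddd : deriv (fun z => (1:ℂ) + (-c) * (w z * w z)) 0 = 0 := by
    rw [deriv_const_add, deriv_const_mul_field, hdW]; ring
  have h2dd : iteratedDeriv 2 (fun z => (1:ℂ) + (-c) * (w z * w z)) 0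
      = -c * (2 * (deriv w 0) ^ 2) := by
    rw [it2_const_add, it2_cmul, h2W]
  have hdee : deriv (fun z => (1:ℂ) + (w z + (-c) * (w z * w z))) 0 = deriv w 0 := by
    rw [deriv_const_add, deriv_fun_add (g := fun z => -c * (w z * w z)) hwa.differentiableAt
      ((differentiableAt_const _).mul (hwa.differentiableAt.mul hwa.differentiableAt)),
      deriv_const_mul_field, hdW]
    ring
  have h2ee : iteratedDeriv 2 (fun z => (1:ℂ) + (w z + (-c) * (w z * w z))) 0
      = iteratedDeriv 2 w 0 + -c * (2 * (deriv w 0) ^ 2) := by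
    rw [it2_const_add, it2_add (v := fun z => -c * (w z * w z)) hwa (analyticAt_const.mul hWa), it2_cmul, h2W]
  have hdq : deriv (fun z => deriv f z * ((1:ℂ) + (-c) * (w z * w z))) 0
      = iteratedDeriv 2 f 0 := by
    rw [deriv_fun_mul hf'a.differentiableAt hdda.differentiableAt, hddd, hw0, hf'0, ← it2_eq]
    ring
  have h2q : iteratedDeriv 2 (fun z => deriv f z * ((1:ℂ) + (-c) * (w z * w z))) 0
      = iteratedDeriv 3 f 0 + -c * (2 * (deriv w 0) ^ 2) := by
    rw [it2_mul hf'a hdda, hddd, h2dd, hw0, hf'0, ← it3_eq]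
    ring
  have hidit2 : iteratedDeriv 2 (id : ℂ → ℂ) 0 = 0 := by
    rw [it2_eq]
    have hdi : deriv (id : ℂ → ℂ) = fun _ => (1:ℂ) := funext fun x => deriv_id x
    rw [hdi]
    simp
  have hidit3 : iteratedDeriv 3 (id : ℂ → ℂ) 0 = 0 := by
    rw [it3_eq]
    have hdi : deriv (id : ℂ → ℂ) = fun _ => (1:ℂ) := funext fun x => deriv_id x
    rw [hdi, it2_eq]
    simp
  -- second and third derivatives of both sides
  have e2G1 : iteratedDeriv 2 (fun z => z * (deriv f z * ((1:ℂ) + (-c) * (w z * w z)))) 0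
      = 2 * iteratedDeriv 2 f 0 := by
    have h := it2_mul (u := (id : ℂ → ℂ)) analyticAt_id hqa
    simp only [id_eq] at h
    rw [h, hidit2, hdq, hw0, hf'0]
    simp [deriv_id]
  have e3G1 : iteratedDeriv 3 (fun z => z * (deriv f z * ((1:ℂ) + (-c) * (w z * w z)))) 0
      = 3 * (iteratedDeriv 3 f 0 + -c * (2 * (deriv w 0) ^ 2)) := by
    have h := it3_mul (u := (id : ℂ → ℂ)) analyticAt_id hqa
    simp only [id_eq] at h
    rw [h, hidit2, hidit3, h2q, hw0, hf'0]
    simp [deriv_id]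
  have e2G2 : iteratedDeriv 2 (fun z => f z * ((1:ℂ) + (w z + (-c) * (w z * w z)))) 0
      = iteratedDeriv 2 f 0 + 2 * deriv w 0 := by
    rw [it2_mul hfa heea, hdee, hf0, hf'0, hw0]
    ring
  have e3G2 : iteratedDeriv 3 (fun z => f z * ((1:ℂ) + (w z + (-c) * (w z * w z)))) 0
      = iteratedDeriv 3 f 0 + 3 * iteratedDeriv 2 f 0 * deriv w 0
        + 3 * (iteratedDeriv 2 w 0 + -c * (2 * (deriv w 0) ^ 2)) := by
    rw [it3_mul hfa heea, h2ee, hdee, hf0, hf'0, hw0]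
    ring
  have hE2 := it2_congr hGev
  have hE3 := it3_congr hGev
  rw [e2G1, e2G2] at hE2
  rw [e3G1, e3G2] at hE3
  have hA2 : iteratedDeriv 2 f 0 = 2 * deriv w 0 := by linear_combination hE2
  have hA3 : 2 * iteratedDeriv 3 f 0 = 6 * (deriv w 0) ^ 2 + 3 * iteratedDeriv 2 w 0 := by
    linear_combination hE3 + 3 * deriv w 0 * hA2
  -- rewrite the target quantity
  have hrepr : iteratedDeriv 3 f 0 / 6 - μ * (iteratedDeriv 2 f 0 / 2) ^ 2
      = (iteratedDeriv 2 w 0 / 2 - (2 * μ - 1) * (deriv w 0) ^ 2) / 2 := by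
    rw [hA2]
    linear_combination hA3 / 12
  rw [hrepr, norm_div]
  have h2n : ‖(2:ℂ)‖ = 2 := by
    rw [show (2:ℂ) = ((2:ℝ):ℂ) by norm_num, Complex.norm_real, Real.norm_eq_abs]
    norm_num
  rw [h2n]
  obtain ⟨hb1, hb2⟩ := schwarz_pick hwd hw0 hwm
  have hT0 : (0:ℝ) ≤ ‖2 * μ - 1‖ := norm_nonneg _
  have hs0 : (0:ℝ) ≤ ‖deriv w 0‖ := norm_nonneg _
  have hnorm : ‖iteratedDeriv 2 w 0 / 2 - (2 * μ - 1) * (deriv w 0) ^ 2‖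
      ≤ ‖iteratedDeriv 2 w 0‖ / 2 + ‖2 * μ - 1‖ * ‖deriv w 0‖ ^ 2 := by
    calc ‖iteratedDeriv 2 w 0 / 2 - (2 * μ - 1) * (deriv w 0) ^ 2‖
        ≤ ‖iteratedDeriv 2 w 0 / 2‖ + ‖(2 * μ - 1) * (deriv w 0) ^ 2‖ := norm_sub_le _ _
      _ = ‖iteratedDeriv 2 w 0‖ / 2 + ‖2 * μ - 1‖ * ‖deriv w 0‖ ^ 2 := by
          rw [norm_div, h2n, norm_mul, norm_pow]
  have hfinal : ‖iteratedDeriv 2 w 0‖ / 2 + ‖2 * μ - 1‖ * ‖deriv w 0‖ ^ 2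
      ≤ max 1 ‖2 * μ - 1‖ := by
    have hM1 : (1:ℝ) ≤ max 1 ‖2 * μ - 1‖ := le_max_left _ _
    have hMT : ‖2 * μ - 1‖ ≤ max 1 ‖2 * μ - 1‖ := le_max_right _ _
    nlinarith [hb2, hb1, mul_nonneg (mul_nonneg hs0 hs0)
      (sub_nonneg.mpr hMT), mul_nonneg (sub_nonneg.mpr hb1) hs0,
      mul_nonneg (mul_nonneg (sub_nonneg.mpr hb1) (add_nonneg hs0 (by norm_num : (0:ℝ) ≤ 1)))
        (sub_nonneg.mpr hM1)]
  linarith [hnorm, hfinal]
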